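/- Let the ground cost on Ω = X × Y be c((x,y),(x',y')) = ‖x − x'‖² + ρ(y,y')², where ρ is a metric on Y. Let P = ∑ᵢ πᵢ^P (Pᵢ ⊗ δ_{νᵢ^P}) and Q = ∑ⱼ πⱼ^Q (Qⱼ ⊗ δ_{νⱼ^Q}) be finite mixtures where Pᵢ, Qⱼ are probability measures on X and νᵢ^P, νⱼ^Q ∈ Y. Then the mixture optimal transport cost min_{ω ∈ Γ(π^P, π^Q)} ∑ᵢⱼ ωᵢⱼ · OT_c(Pᵢ ⊗ δ_{νᵢ^P}, Qⱼ ⊗ δ_{νⱼ^Q}) equals min_{ω ∈ Γ(π^P, π^Q)} ∑ᵢⱼ ωᵢⱼ (W₂(Pᵢ, Qⱼ)² + ρ(νᵢ^P, νⱼ^Q)²), i.e., the transport cost between component (i,j) decomposes as the feature Wasserstein cost plus the label distance squared. -/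

import Mathlib

open MeasureTheory Finset

/-- The squared 2-Wasserstein distance, defined via the Kantorovich problem. -/
noncomputable def W2sq {X : Type*} [MeasurableSpace X] [PseudoMetricSpace X]
    (P Q : Measure X) : ℝ :=
  sInf {c | ∃ γ : Measure (X × X), γ.map Prod.fst = P ∧ γ.map Prod.snd = Q ∧
    c = ∫ p, dist p.1 p.2 ^ 2 ∂γ}

/-- The Kantorovich optimal transport cost on `X × Y` with ground cost
`c((x,y),(x',y')) = dist(x,x')² + ρ(y,y')²`. -/
noncomputable def OTc {X Y : Type*} [MeasurableSpace X] [PseudoMetricSpace X]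
    [MeasurableSpace Y] [PseudoMetricSpace Y]
    (μ ν : Measure (X × Y)) : ℝ :=
  sInf {c | ∃ γ : Measure ((X × Y) × (X × Y)), γ.map Prod.fst = μ ∧ γ.map Prod.snd = ν ∧
    c = ∫ p, (dist p.1.1 p.2.1 ^ 2 + dist p.1.2 p.2.2 ^ 2) ∂γ}

private lemma integrable_distsq {dim : ℕ}
    (P Q : Measure (EuclideanSpace ℝ (Fin dim)))
    (γ : Measure (EuclideanSpace ℝ (Fin dim) × EuclideanSpace ℝ (Fin dim)))
    (h1 : γ.map Prod.fst = P) (h2 : γ.map Prod.snd = Q)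
    (hP2 : Integrable (fun x => ‖x‖ ^ 2) P) (hQ2 : Integrable (fun x => ‖x‖ ^ 2) Q) :
    Integrable (fun p => dist p.1 p.2 ^ 2) γ := by
  have hA : Integrable (fun p : EuclideanSpace ℝ (Fin dim) × EuclideanSpace ℝ (Fin dim) =>
      ‖p.1‖ ^ 2) γ := by
    rw [← h1] at hP2
    exact hP2.comp_measurable measurable_fst
  have hB : Integrable (fun p : EuclideanSpace ℝ (Fin dim) × EuclideanSpace ℝ (Fin dim) =>
      ‖p.2‖ ^ 2) γ := by
    rw [← h2] at hQ2
    exact hQ2.comp_measurable measurable_snd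
  have hmeas : AEStronglyMeasurable (fun p : EuclideanSpace ℝ (Fin dim) ×
      EuclideanSpace ℝ (Fin dim) => dist p.1 p.2 ^ 2) γ :=
    ((continuous_fst.dist continuous_snd).pow 2).aestronglyMeasurable
  refine Integrable.mono' (((hA.const_mul 2).add (hB.const_mul 2))) hmeas ?_
  filter_upwards with p
  simp only [Pi.add_apply]
  rw [Real.norm_eq_abs, abs_of_nonneg (by positivity)]
  have hd : dist p.1 p.2 ≤ ‖p.1‖ + ‖p.2‖ := dist_le_norm_add_norm _ _
  have hsq : dist p.1 p.2 ^ 2 ≤ (‖p.1‖ + ‖p.2‖) ^ 2 := pow_le_pow_left₀ dist_nonneg hd 2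
  nlinarith [sq_nonneg (‖p.1‖ - ‖p.2‖)]

set_option maxHeartbeats 1000000 in
set_option synthInstance.maxHeartbeats 400000 in
private lemma OTc_prod_dirac {dim : ℕ} {Y : Type*} [MetricSpace Y]
    [MeasurableSpace Y] [MeasurableSingletonClass Y] [OpensMeasurableSpace Y]
    (P Q : Measure (EuclideanSpace ℝ (Fin dim)))
    (hP : IsProbabilityMeasure P) (hQ : IsProbabilityMeasure Q)
    (hP2 : Integrable (fun x => ‖x‖ ^ 2) P) (hQ2 : Integrable (fun x => ‖x‖ ^ 2) Q)
    (a b : Y) :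
    OTc (P.prod (Measure.dirac a)) (Q.prod (Measure.dirac b)) = W2sq P Q + dist a b ^ 2 := by
  set E := EuclideanSpace ℝ (Fin dim)
  set r := dist a b ^ 2 with hr
  set S2 : Set ℝ := {c | ∃ γ : Measure (E × E), γ.map Prod.fst = P ∧ γ.map Prod.snd = Q ∧
    c = ∫ p, dist p.1 p.2 ^ 2 ∂γ} with hS2
  -- a.e. constancy of the label coordinates for any admissible coupling
  have hylem : ∀ (γ : Measure ((E × Y) × (E × Y))),
      γ.map Prod.fst = P.prod (Measure.dirac a) → γ.map Prod.snd = Q.prod (Measure.dirac b) →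
      (∀ᵐ p ∂γ, p.1.2 = a) ∧ (∀ᵐ p ∂γ, p.2.2 = b) := by
    intro γ hγ1 hγ2
    constructor
    · have hm : Measurable (fun p : (E × Y) × (E × Y) => p.1.2) :=
        measurable_snd.comp measurable_fst
      have hmap : γ.map (fun p => p.1.2) = Measure.dirac a := by
        rw [show (fun p : (E × Y) × (E × Y) => p.1.2) = Prod.snd ∘ Prod.fst from rfl,
          ← Measure.map_map measurable_snd measurable_fst, hγ1, Measure.map_snd_prod]
        simp
      have h0 : γ ((fun p : (E × Y) × (E × Y) => p.1.2) ⁻¹' {a}ᶜ) = 0 := by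
        rw [← Measure.map_apply hm (MeasurableSet.singleton a).compl, hmap,
          Measure.dirac_apply' _ (MeasurableSet.singleton a).compl]
        simp
      rw [ae_iff]
      simpa [Set.preimage] using h0
    · have hm : Measurable (fun p : (E × Y) × (E × Y) => p.2.2) :=
        measurable_snd.comp measurable_snd
      have hmap : γ.map (fun p => p.2.2) = Measure.dirac b := by
        rw [show (fun p : (E × Y) × (E × Y) => p.2.2) = Prod.snd ∘ Prod.snd from rfl,
          ← Measure.map_map measurable_snd measurable_snd, hγ2, Measure.map_snd_prod]
        simp
      have h0 : γ ((fun p : (E × Y) × (E × Y) => p.2.2) ⁻¹' {b}ᶜ) = 0 := by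
        rw [← Measure.map_apply hm (MeasurableSet.singleton b).compl, hmap,
          Measure.dirac_apply' _ (MeasurableSet.singleton b).compl]
        simp
      rw [ae_iff]
      simpa [Set.preimage] using h0
  have hset : {c | ∃ γ : Measure ((E × Y) × (E × Y)),
      γ.map Prod.fst = P.prod (Measure.dirac a) ∧ γ.map Prod.snd = Q.prod (Measure.dirac b) ∧
      c = ∫ p, (dist p.1.1 p.2.1 ^ 2 + dist p.1.2 p.2.2 ^ 2) ∂γ} = (fun c => c + r) '' S2 := by
    ext c
    constructor
    · rintro ⟨γ, hγ1, hγ2, rfl⟩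
      haveI : IsProbabilityMeasure γ := by
        constructor
        have : γ.map Prod.fst Set.univ = 1 := by rw [hγ1]; exact measure_univ
        rwa [Measure.map_apply measurable_fst MeasurableSet.univ, Set.preimage_univ] at this
      obtain ⟨hy1, hy2⟩ := hylem γ hγ1 hγ2
      -- project to the x-coordinates
      have hf : Measurable (fun p : (E × Y) × (E × Y) => (p.1.1, p.2.1)) :=
        (measurable_fst.comp measurable_fst).prodMk (measurable_fst.comp measurable_snd)
      set γ' : Measure (E × E) := γ.map (fun p => (p.1.1, p.2.1)) with hγ'
      have h1' : γ'.map Prod.fst = P := by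
        rw [hγ', Measure.map_map measurable_fst hf,
          show (Prod.fst ∘ fun p : (E × Y) × (E × Y) => (p.1.1, p.2.1)) =
            Prod.fst ∘ Prod.fst from rfl,
          ← Measure.map_map measurable_fst measurable_fst, hγ1, Measure.map_fst_prod]
        simp
      have h2' : γ'.map Prod.snd = Q := by
        rw [hγ', Measure.map_map measurable_snd hf,
          show (Prod.snd ∘ fun p : (E × Y) × (E × Y) => (p.1.1, p.2.1)) =
            Prod.fst ∘ Prod.snd from rfl,
          ← Measure.map_map measurable_fst measurable_snd, hγ2, Measure.map_fst_prod]
        simp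
      have hint : Integrable (fun p : (E × Y) × (E × Y) => dist p.1.1 p.2.1 ^ 2) γ :=
        (integrable_distsq P Q γ' h1' h2' hP2 hQ2).comp_measurable hf
      have hmapint : ∫ q, dist q.1 q.2 ^ 2 ∂γ' = ∫ p, dist p.1.1 p.2.1 ^ 2 ∂γ := by
        rw [hγ', integral_map (f := fun q : E × E => dist q.1 q.2 ^ 2) hf.aemeasurable
          ((continuous_fst.dist continuous_snd).pow 2).aestronglyMeasurable]
      refine ⟨∫ q, dist q.1 q.2 ^ 2 ∂γ', ⟨γ', h1', h2', rfl⟩, ?_⟩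
      show (∫ q, dist q.1 q.2 ^ 2 ∂γ') + r = _
      have hcongr : ∫ p, (dist p.1.1 p.2.1 ^ 2 + dist p.1.2 p.2.2 ^ 2) ∂γ =
          ∫ p, (dist p.1.1 p.2.1 ^ 2 + r) ∂γ := by
        refine integral_congr_ae ?_
        filter_upwards [hy1, hy2] with p h1 h2
        rw [h1, h2]
      rw [hcongr, integral_add hint (integrable_const _), integral_const, hmapint]
      simp
    · rintro ⟨c', ⟨γ', h1', h2', rfl⟩, rfl⟩
      haveI : IsProbabilityMeasure γ' := by
        constructor
        have : γ'.map Prod.fst Set.univ = 1 := by rw [h1']; exact measure_univ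
        rwa [Measure.map_apply measurable_fst MeasurableSet.univ, Set.preimage_univ] at this
      have hg : Measurable (fun q : E × E => ((q.1, a), (q.2, b))) :=
        ((measurable_fst.prodMk measurable_const)).prodMk
          (measurable_snd.prodMk measurable_const)
      set γ : Measure ((E × Y) × (E × Y)) := γ'.map (fun q => ((q.1, a), (q.2, b))) with hγ
      have hm1 : γ.map Prod.fst = P.prod (Measure.dirac a) := by
        rw [hγ, Measure.map_map measurable_fst hg,
          show (Prod.fst ∘ fun q : E × E => ((q.1, a), (q.2, b))) =
            (fun x : E => (x, a)) ∘ Prod.fst from rfl,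
          ← Measure.map_map measurable_prodMk_right measurable_fst, h1',
          ← Measure.prod_dirac]
      have hm2 : γ.map Prod.snd = Q.prod (Measure.dirac b) := by
        rw [hγ, Measure.map_map measurable_snd hg,
          show (Prod.snd ∘ fun q : E × E => ((q.1, a), (q.2, b))) =
            (fun x : E => (x, b)) ∘ Prod.snd from rfl,
          ← Measure.map_map measurable_prodMk_right measurable_snd, h2',
          ← Measure.prod_dirac]
      refine ⟨γ, hm1, hm2, ?_⟩
      obtain ⟨hy1, hy2⟩ := hylem γ hm1 hm2
      show (∫ p, dist p.1 p.2 ^ 2 ∂γ') + r = _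
      have hφm : StronglyMeasurable
          (fun p : (E × Y) × (E × Y) => dist p.1.1 p.2.1 ^ 2 + r) := by
        refine Measurable.stronglyMeasurable ?_
        exact (((measurable_fst.comp measurable_fst).dist
          (measurable_fst.comp measurable_snd)).pow_const 2).add_const r
      have hcongr : ∫ p, (dist p.1.1 p.2.1 ^ 2 + dist p.1.2 p.2.2 ^ 2) ∂γ =
          ∫ p, (dist p.1.1 p.2.1 ^ 2 + r) ∂γ := by
        refine integral_congr_ae ?_
        filter_upwards [hy1, hy2] with p h1 h2
        rw [h1, h2]
      rw [hcongr, hγ, integral_map hg.aemeasurable hφm.aestronglyMeasurable]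
      simp only
      rw [integral_add (integrable_distsq P Q γ' h1' h2' hP2 hQ2) (integrable_const _),
        integral_const]
      simp
      rfl
  have hne : S2.Nonempty := by
    refine ⟨∫ p, dist p.1 p.2 ^ 2 ∂(P.prod Q), P.prod Q, ?_, ?_, rfl⟩
    · rw [Measure.map_fst_prod]; simp
    · rw [Measure.map_snd_prod]; simp
  have hbdd : BddBelow S2 := by
    refine ⟨0, ?_⟩
    rintro c ⟨γ', _, _, rfl⟩
    exact integral_nonneg fun p => by positivity
  show sInf _ = sInf S2 + r
  rw [hset]
  exact ((OrderIso.addRight r).map_csInf' hne hbdd).symm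

/-- For labeled mixtures with components `Pᵢ ⊗ δ_{νᵢ}` and `Qⱼ ⊗ δ_{νⱼ'}`, the mixture optimal
transport cost with the ground cost `‖x−x'‖² + ρ(y,y')²` decomposes component-wise as the
feature Wasserstein cost plus the squared label distance (Proposition 1). -/
theorem mixture_OT_decomposition {dim n m : ℕ} {Y : Type*} [MetricSpace Y]
    [MeasurableSpace Y] [MeasurableSingletonClass Y] [OpensMeasurableSpace Y]
    (Pm : Fin n → Measure (EuclideanSpace ℝ (Fin dim)))
    (Qm : Fin m → Measure (EuclideanSpace ℝ (Fin dim)))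
    (hPm : ∀ i, IsProbabilityMeasure (Pm i)) (hQm : ∀ j, IsProbabilityMeasure (Qm j))
    (hPm2 : ∀ i, Integrable (fun x => ‖x‖ ^ 2) (Pm i))
    (hQm2 : ∀ j, Integrable (fun x => ‖x‖ ^ 2) (Qm j))
    (νP : Fin n → Y) (νQ : Fin m → Y)
    (πP : Fin n → ℝ) (πQ : Fin m → ℝ)
    (hπP : ∀ i, 0 ≤ πP i) (hπQ : ∀ j, 0 ≤ πQ j)
    (hπP1 : ∑ i, πP i = 1) (hπQ1 : ∑ j, πQ j = 1) :
    let Γ : Set (Matrix (Fin n) (Fin m) ℝ) :=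
      {ω | (∀ i j, 0 ≤ ω i j) ∧ (∀ i, ∑ j, ω i j = πP i) ∧ (∀ j, ∑ i, ω i j = πQ j)}
    sInf {c | ∃ ω ∈ Γ, c = ∑ i, ∑ j, ω i j *
        OTc ((Pm i).prod (Measure.dirac (νP i))) ((Qm j).prod (Measure.dirac (νQ j)))} =
    sInf {c | ∃ ω ∈ Γ, c = ∑ i, ∑ j, ω i j *
        (W2sq (Pm i) (Qm j) + dist (νP i) (νQ j) ^ 2)} := by
  intro Γ
  have key : ∀ (i : Fin n) (j : Fin m),
      OTc ((Pm i).prod (Measure.dirac (νP i))) ((Qm j).prod (Measure.dirac (νQ j))) =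
        W2sq (Pm i) (Qm j) + dist (νP i) (νQ j) ^ 2 := fun i j =>
    OTc_prod_dirac _ _ (hPm i) (hQm j) (hPm2 i) (hQm2 j) _ _
  simp only [key]
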